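/- Fix n ≥ 1. The set of holographic entropy vectors of graph models on n regions is a convex cone: if s and s' are holographic entropy vectors of graph models on n regions and λ ≥ 0 is a real number, then s + s' and λ·s are also holographic entropy vectors of graph models on n regions. (The sum is realized by the disjoint union of the two graph models, and the scaling by multiplying all edge weights by λ.) -/

import Mathlib

open Classical

/-- A *graph model* on `n` regions: a finite graph with symmetric nonnegative edge
weights `w` (weight `0` meaning "no edge") and a partial coloring of the vertices by
the `n+1` boundary colors; `color v = none` means `v` is a bulk vertex, color
`Fin.castSucc i` represents boundary region `i ∈ {1,…,n}` and color `Fin.last n`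
represents the purifying region `n+1`. -/
structure GraphModel (n : ℕ) where
  V : Type
  [fintypeV : Fintype V]
  w : V → V → ℝ
  symm : ∀ u v, w u v = w v u
  nonneg : ∀ u v, 0 ≤ w u v
  color : V → Option (Fin (n + 1))

attribute [instance] GraphModel.fintypeV

/-- `|C(W)|`: the total weight of the edges with exactly one endpoint in `W`
(each unordered crossing edge `{u,v}` is counted exactly once, via its ordering
with `u ∈ W` and `v ∉ W`). -/
noncomputable def GraphModel.cutWeight {n : ℕ} (G : GraphModel n) (W : Set G.V) : ℝ :=
  ∑ u : G.V, ∑ v : G.V, if u ∈ W ∧ v ∉ W then G.w u v else 0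

/-- `W` is an `I`-cut: `W` contains precisely the boundary vertices whose color lies
in `I ⊆ {1,…,n}`. -/
def GraphModel.IsCut {n : ℕ} (G : GraphModel n) (I : Finset (Fin n)) (W : Set G.V) : Prop :=
  ∀ v c, G.color v = some c → (v ∈ W ↔ ∃ i ∈ I, Fin.castSucc i = c)

/-- The discrete entropy `S*(I)`: the minimal weight of an `I`-cut. -/
noncomputable def GraphModel.entropy {n : ℕ} (G : GraphModel n) (I : Finset (Fin n)) : ℝ :=
  sInf (G.cutWeight '' {W | G.IsCut I W})

/-- The holographic entropy vector of a graph model: the collection of all discrete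
entropies `S*(I)` of nonempty subsets `I ⊆ {1,…,n}`. -/
noncomputable def GraphModel.entropyVector {n : ℕ} (G : GraphModel n)
    (I : {I : Finset (Fin n) // I.Nonempty}) : ℝ :=
  G.entropy I.1

section Aux

lemma GraphModel.cut_nonempty {n : ℕ} (G : GraphModel n) (I : Finset (Fin n)) :
    {W | G.IsCut I W}.Nonempty := by
  refine ⟨{v | ∃ c, G.color v = some c ∧ ∃ i ∈ I, Fin.castSucc i = c}, ?_⟩
  intro v c hc
  simp only [Set.mem_setOf_eq]
  constructor
  · rintro ⟨c', hc', hi⟩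
    rw [hc] at hc'
    cases Option.some.inj hc'
    exact hi
  · intro hi; exact ⟨c, hc, hi⟩

lemma GraphModel.exists_min {n : ℕ} (G : GraphModel n) (I : Finset (Fin n)) :
    ∃ W, G.IsCut I W ∧ G.cutWeight W = G.entropy I := by
  have h := Set.Nonempty.csInf_mem
    (((G.cut_nonempty I).image G.cutWeight)) (Set.toFinite _)
  obtain ⟨W, hW, hEq⟩ := h
  exact ⟨W, hW, hEq⟩

lemma GraphModel.entropy_le {n : ℕ} (G : GraphModel n) (I : Finset (Fin n))
    {W : Set G.V} (hW : G.IsCut I W) : G.entropy I ≤ G.cutWeight W :=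
  csInf_le (Set.toFinite _).bddBelow ⟨W, hW, rfl⟩

/-- Disjoint union of two graph models. -/
def GraphModel.sumModel {n : ℕ} (G G' : GraphModel n) : GraphModel n where
  V := G.V ⊕ G'.V
  w := fun u v => match u, v with
    | .inl a, .inl b => G.w a b
    | .inr a, .inr b => G'.w a b
    | _, _ => 0
  symm := by rintro (a | a) (b | b) <;> simp [G.symm, G'.symm]
  nonneg := by rintro (a | a) (b | b) <;> simp [G.nonneg, G'.nonneg]
  color := Sum.elim G.color G'.color

lemma GraphModel.sumModel_cutWeight {n : ℕ} (G G' : GraphModel n)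
    (W : Set (G.sumModel G').V) :
    (G.sumModel G').cutWeight W =
      G.cutWeight (Sum.inl ⁻¹' W) + G'.cutWeight (Sum.inr ⁻¹' W) := by
  simp only [GraphModel.cutWeight, GraphModel.sumModel, Fintype.sum_sum_type,
    Set.mem_preimage, ite_self, Finset.sum_const_zero, add_zero, zero_add]
  change (∑ u : G.V ⊕ G'.V, ∑ v : G.V ⊕ G'.V, _) = _
  simp only [Fintype.sum_sum_type, ite_self, Finset.sum_const_zero, add_zero, zero_add]
  rfl

lemma GraphModel.sumModel_isCut {n : ℕ} (G G' : GraphModel n) (I : Finset (Fin n))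
    (W : Set (G.sumModel G').V) :
    (G.sumModel G').IsCut I W ↔
      G.IsCut I (Sum.inl ⁻¹' W) ∧ G'.IsCut I (Sum.inr ⁻¹' W) := by
  constructor
  · intro h
    exact ⟨fun v c hc => h (Sum.inl v) c hc, fun v c hc => h (Sum.inr v) c hc⟩
  · rintro ⟨h1, h2⟩ (v | v) c hc
    · exact h1 v c hc
    · exact h2 v c hc

lemma GraphModel.sumModel_entropy {n : ℕ} (G G' : GraphModel n) (I : Finset (Fin n)) :
    (G.sumModel G').entropy I = G.entropy I + G'.entropy I := by
  apply le_antisymm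
  · obtain ⟨W1, hW1, hE1⟩ := G.exists_min I
    obtain ⟨W2, hW2, hE2⟩ := G'.exists_min I
    set W : Set (G.sumModel G').V := Sum.inl '' W1 ∪ Sum.inr '' W2 with hWdef
    have hpre1 : Sum.inl ⁻¹' W = W1 := by
      ext v; show (Sum.inl v : G.V ⊕ G'.V) ∈ Sum.inl '' W1 ∪ Sum.inr '' W2 ↔ _; simp
    have hpre2 : Sum.inr ⁻¹' W = W2 := by
      ext v; show (Sum.inr v : G.V ⊕ G'.V) ∈ Sum.inl '' W1 ∪ Sum.inr '' W2 ↔ _; simp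
    have hcut : (G.sumModel G').IsCut I W := by
      rw [GraphModel.sumModel_isCut, hpre1, hpre2]; exact ⟨hW1, hW2⟩
    calc (G.sumModel G').entropy I ≤ (G.sumModel G').cutWeight W :=
          (G.sumModel G').entropy_le I hcut
      _ = G.entropy I + G'.entropy I := by
          rw [GraphModel.sumModel_cutWeight, hpre1, hpre2, hE1, hE2]
  · obtain ⟨W, hW, hE⟩ := (G.sumModel G').exists_min I
    rw [GraphModel.sumModel_isCut] at hW
    rw [← hE, GraphModel.sumModel_cutWeight]
    exact add_le_add (G.entropy_le I hW.1) (G'.entropy_le I hW.2)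

/-- Scaling a graph model's weights. -/
def GraphModel.smulModel {n : ℕ} (lam : ℝ) (hlam : 0 ≤ lam) (G : GraphModel n) :
    GraphModel n where
  V := G.V
  w := fun u v => lam * G.w u v
  symm := fun u v => by show lam * G.w u v = lam * G.w v u; rw [G.symm]
  nonneg := fun u v => mul_nonneg hlam (G.nonneg u v)
  color := G.color

lemma GraphModel.smulModel_entropy {n : ℕ} (lam : ℝ) (hlam : 0 ≤ lam)
    (G : GraphModel n) (I : Finset (Fin n)) :
    (GraphModel.smulModel lam hlam G).entropy I = lam * G.entropy I := by
  have hcw : ∀ W : Set G.V, (GraphModel.smulModel lam hlam G).cutWeight W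
      = lam * G.cutWeight W := by
    intro W
    simp only [GraphModel.cutWeight, GraphModel.smulModel, Finset.mul_sum, mul_ite, mul_zero]
    rfl
  have hcut : ∀ W : Set G.V, (GraphModel.smulModel lam hlam G).IsCut I W ↔ G.IsCut I W := by
    intro W; rfl
  apply le_antisymm
  · obtain ⟨W, hW, hE⟩ := G.exists_min I
    calc (GraphModel.smulModel lam hlam G).entropy I
        ≤ (GraphModel.smulModel lam hlam G).cutWeight W :=
          (GraphModel.smulModel lam hlam G).entropy_le I ((hcut W).2 hW)
      _ = lam * G.entropy I := by rw [hcw, hE]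
  · obtain ⟨W, hW, hE⟩ := (GraphModel.smulModel lam hlam G).exists_min I
    rw [← hE, hcw W]
    exact mul_le_mul_of_nonneg_left (G.entropy_le I ((hcut W).1 hW)) hlam

end Aux

/-- For fixed `n ≥ 1`, the set of holographic entropy vectors of graph
models on `n` regions is a convex cone: it is closed under addition and under scaling
by nonnegative reals. -/
theorem stmt0 (n : ℕ) (hn : 1 ≤ n)
    (s s' : {I : Finset (Fin n) // I.Nonempty} → ℝ) (lam : ℝ) (hlam : 0 ≤ lam)
    (hs : ∃ G : GraphModel n, G.entropyVector = s)
    (hs' : ∃ G : GraphModel n, G.entropyVector = s') :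
    (∃ G : GraphModel n, G.entropyVector = s + s') ∧
    (∃ G : GraphModel n, G.entropyVector = lam • s) := by
  obtain ⟨G, rfl⟩ := hs
  obtain ⟨G', rfl⟩ := hs'
  constructor
  · exact ⟨G.sumModel G', funext fun I => G.sumModel_entropy G' I.1⟩
  · exact ⟨GraphModel.smulModel lam hlam G, funext fun I =>
      GraphModel.smulModel_entropy lam hlam G I.1⟩
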